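/- arXiv:2404.10079 — 3 statements merged into one kernel-verified Lean document; each statement's English description precedes it below -/
import Mathlib

section
/- Let V be a finite-dimensional real vector space, let J₀, J₁ : V → V satisfy J₀² = J₁² = -id, and suppose id - J₀J₁ is invertible. Set L := (id - J₀J₁)⁻¹(id + J₀J₁). Then id + L is invertible and (id + L) J₀ (id + L)⁻¹ = J₁. -/
theorem stmt_2 (V : Type*) [AddCommGroup V] [Module ℝ V] [FiniteDimensional ℝ V]
    (J₀ J₁ : Module.End ℝ V)
    (hJ₀ : J₀ * J₀ = -1) (hJ₁ : J₁ * J₁ = -1)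
    (hInv : IsUnit (1 - J₀ * J₁))
    (L : Module.End ℝ V)
    (hL : L = Ring.inverse (1 - J₀ * J₁) * (1 + J₀ * J₁)) :
    IsUnit (1 + L) ∧ (1 + L) * J₀ * Ring.inverse (1 + L) = J₁ := by
  set A := 1 - J₀ * J₁ with hA
  have h2 : IsUnit (2 : Module.End ℝ V) := by
    have h := (isUnit_iff_ne_zero.mpr (two_ne_zero (α := ℝ))).map (algebraMap ℝ (Module.End ℝ V))
    rwa [map_ofNat] at h
  have hL1 : 1 + L = Ring.inverse A * 2 := by
    calc 1 + L = Ring.inverse A * A + Ring.inverse A * (1 + J₀ * J₁) := by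
          rw [hL, Ring.inverse_mul_cancel _ hInv]
      _ = Ring.inverse A * (A + (1 + J₀ * J₁)) := (mul_add _ _ _).symm
      _ = Ring.inverse A * 2 := by rw [hA]; congr 1; rw [← one_add_one_eq_two]; abel
  have hU : IsUnit (1 + L) := by
    rw [hL1]; exact (isUnit_ringInverse.mpr hInv).mul h2
  refine ⟨hU, ?_⟩
  -- key algebraic identity: J₀ * A = A * J₁
  have hkey : J₀ * A = A * J₁ := by
    rw [hA, mul_sub, sub_mul, ← mul_assoc, hJ₀, mul_assoc, hJ₁]
    noncomm_ring
  have h2' : Ring.inverse A * J₀ = J₁ * Ring.inverse A := by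
    have h := congrArg (fun x => Ring.inverse A * x * Ring.inverse A) hkey
    simpa [mul_assoc, Ring.mul_inverse_cancel _ hInv,
      Ring.inverse_mul_cancel_left _ _ hInv] using h
  -- reduce to (1 + L) * J₀ = J₁ * (1 + L)
  obtain ⟨u, hu⟩ := hU
  rw [← hu, Ring.inverse_unit, Units.mul_inv_eq_iff_eq_mul]
  have hcomm : (2 : Module.End ℝ V) * J₀ = J₀ * 2 := by
    rw [two_mul, mul_two]
  have hcomm' : J₁ * (2 : Module.End ℝ V) = 2 * J₁ := by
    rw [two_mul, mul_two]
  calc (u : Module.End ℝ V) * J₀ = Ring.inverse A * 2 * J₀ := by rw [hu, hL1]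
    _ = Ring.inverse A * J₀ * 2 := by rw [mul_assoc, hcomm, ← mul_assoc]
    _ = J₁ * Ring.inverse A * 2 := by rw [h2']
    _ = J₁ * (Ring.inverse A * 2) := by rw [mul_assoc]
    _ = J₁ * u := by rw [← hL1, hu]
end

section
/- Let G : ℝ → Matrix (Fin n) (Fin m) ℝ be a matrix-valued function, real analytic on an open interval containing [−a, a] (each entry is real analytic). Let k := max(rank(G 0), rank(G a)). Then the set {t ∈ [−a, a] : rank(G t) < k} is finite. -/
open Module Submodule Matrix

lemma aux_exists_li_comp {ι : Type*} {V : Type*} [AddCommGroup V] [Module ℝ V]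
    [FiniteDimensional ℝ V] (v : ι → V) (k : ℕ)
    (hk : k ≤ finrank ℝ (span ℝ (Set.range v))) :
    ∃ r : Fin k → ι, LinearIndependent ℝ (v ∘ r) := by
  classical
  obtain ⟨s, hsub, hspan, hli⟩ := exists_linearIndependent ℝ (Set.range v)
  have hsfin : s.Finite := hli.setFinite
  haveI := hsfin.fintype
  have hcard : k ≤ Fintype.card s := by
    have h1 : finrank ℝ (span ℝ s) = s.toFinset.card := finrank_span_set_eq_card hli
    rw [← hspan, h1, Set.toFinset_card] at hk
    exact hk
  obtain ⟨f⟩ := Function.Embedding.nonempty_of_card_le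
    (α := Fin k) (β := s) (by simpa using hcard)
  choose r hr using fun i : Fin k => hsub (f i).2
  refine ⟨r, ?_⟩
  have hvr : v ∘ r = (fun x : s => (x : V)) ∘ f := funext fun i => hr i
  rw [hvr]
  exact hli.comp f f.injective

lemma aux_rank_submatrix_le {n m k : ℕ} (A : Matrix (Fin n) (Fin m) ℝ)
    (r : Fin k → Fin n) (c : Fin k → Fin m) : (A.submatrix r c).rank ≤ A.rank := by
  classical
  have h : A.submatrix r c =
      (Matrix.of fun i x => if x = r i then (1 : ℝ) else 0) *
        (A * Matrix.of fun y j => if y = c j then (1 : ℝ) else 0) := by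
    ext i j
    simp [Matrix.mul_apply, ite_mul, mul_ite, Finset.mul_sum]
  rw [h]
  exact (Matrix.rank_mul_le_right _ _).trans (Matrix.rank_mul_le_left _ _)

lemma aux_exists_invertible_submatrix {n m k : ℕ} (A : Matrix (Fin n) (Fin m) ℝ)
    (hk : k ≤ A.rank) :
    ∃ (r : Fin k → Fin n) (c : Fin k → Fin m), IsUnit (A.submatrix r c).det := by
  rw [Matrix.rank_eq_finrank_span_cols] at hk
  obtain ⟨cs, hcs⟩ := aux_exists_li_comp Aᵀ k hk
  set B := A.submatrix id cs with hB
  have hBt : Bᵀ = Aᵀ ∘ cs := rfl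
  have hBtli : LinearIndependent ℝ Bᵀ := by rw [hBt]; exact hcs
  have hBrank : B.rank = k := by
    rw [← Matrix.rank_transpose, hBtli.rank_matrix (M := Bᵀ), Fintype.card_fin]
  have h2 : k ≤ finrank ℝ (span ℝ (Set.range B)) := by
    rw [show Set.range B = Set.range B.row from rfl, ← Matrix.rank_eq_finrank_span_row, hBrank]
  obtain ⟨rs, hrs⟩ := aux_exists_li_comp B k h2
  refine ⟨rs, cs, ?_⟩
  have hli : LinearIndependent ℝ (fun i => (A.submatrix rs cs) i) := hrs
  exact (Matrix.isUnit_iff_isUnit_det _).mp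
    (Matrix.linearIndependent_rows_iff_isUnit (A := A.submatrix rs cs) |>.mp hli)

theorem stmt_4 (n m : ℕ) (G : ℝ → Matrix (Fin n) (Fin m) ℝ) (a c d : ℝ)
    (ha : 0 < a) (hsub : Set.Icc (-a) a ⊆ Set.Ioo c d)
    (hG : ∀ i j, AnalyticOnNhd ℝ (fun t => G t i j) (Set.Ioo c d))
    (k : ℕ) (hk : k = max (G 0).rank (G a).rank) :
    {t ∈ Set.Icc (-a) a | (G t).rank < k}.Finite := by
  classical
  -- pick the point t0 ∈ [-a,a] where rank is ≥ k
  have hmem0 : (0 : ℝ) ∈ Set.Icc (-a) a := ⟨by linarith, le_of_lt ha⟩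
  have hmema : a ∈ Set.Icc (-a) a := ⟨by linarith, le_refl a⟩
  have hex : ∃ t0 ∈ Set.Icc (-a) a, k ≤ (G t0).rank := by
    rcases le_max_iff.mp hk.le with h | h
    · exact ⟨0, hmem0, h⟩
    · exact ⟨a, hmema, h⟩
  obtain ⟨t0, ht0mem, ht0k⟩ := hex
  obtain ⟨rs, cs, hdet⟩ := aux_exists_invertible_submatrix (G t0) ht0k
  set f : ℝ → ℝ := fun t => ((G t).submatrix rs cs).det with hf
  -- f is analytic
  have hfa : AnalyticOnNhd ℝ f (Set.Ioo c d) := by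
    have hdef : f = fun t => ∑ σ : Equiv.Perm (Fin k),
        ((Equiv.Perm.sign σ : ℤ) : ℝ) * ∏ i, G t (rs (σ i)) (cs i) := by
      funext t
      show ((G t).submatrix rs cs).det = _
      rw [Matrix.det_apply']
      rfl
    rw [hdef]
    apply Finset.analyticOnNhd_fun_sum
    intro σ _
    exact analyticOnNhd_const.mul
      (Finset.analyticOnNhd_fun_prod _ fun i _ => hG (rs (σ i)) (cs i))
  -- the bad set is contained in the zero set of f
  set S := {t ∈ Set.Icc (-a) a | (G t).rank < k} with hS
  set Z := {t ∈ Set.Icc (-a) a | f t = 0} with hZ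
  have hSZ : S ⊆ Z := by
    rintro t ⟨htmem, htlt⟩
    refine ⟨htmem, ?_⟩
    by_contra hne
    have hu : IsUnit ((G t).submatrix rs cs).det := isUnit_iff_ne_zero.mpr hne
    have hrk : ((G t).submatrix rs cs).rank = k := by
      rw [Matrix.rank_of_isUnit _ ((Matrix.isUnit_iff_isUnit_det _).mpr hu),
        Fintype.card_fin]
    have := aux_rank_submatrix_le (G t) rs cs
    omega
  by_contra hinf
  have hSinf : S.Infinite := hinf
  have hZinf : Z.Infinite := hSinf.mono hSZ
  obtain ⟨z₀, hz₀mem, hz₀⟩ := hZinf.exists_accPt_of_subset_isCompact isCompact_Icc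
    (Set.sep_subset _ _)
  have hfreq : ∃ᶠ z in nhdsWithin z₀ {z₀}ᶜ, f z = 0 := by
    rw [accPt_iff_frequently] at hz₀
    rw [frequently_nhdsWithin_iff]
    exact hz₀.mono fun y hy => ⟨hy.2.2, hy.1⟩
  have hzero := hfa.eqOn_zero_of_preconnected_of_frequently_eq_zero isPreconnected_Ioo
    (hsub hz₀mem) hfreq
  have : f t0 = 0 := hzero (hsub ht0mem)
  exact hdet.ne_zero this
end

section
/- Let I = [0,1] and let F : I → Matrix (Fin n) (Fin m) ℝ be a function such that every t₀ ∈ I has a compact neighborhood on which F agrees with a convergent power series (in t − t₀) with matrix coefficients. Suppose rank(F t₁) ≥ k for some t₁ ∈ I. Then {t ∈ I : rank(F t) < k} is finite. -/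
open Module Set Matrix

/-- From a family whose span has finrank ≥ k, select k indices giving a linearly
independent subfamily. -/
lemma aux_select {K V : Type*} [Field K] [AddCommGroup V] [Module K V]
    {ι : Type*} [Fintype ι] (v : ι → V) (k : ℕ)
    (hk : k ≤ finrank K (Submodule.span K (Set.range v))) :
    ∃ c : Fin k → ι, LinearIndependent K (v ∘ c) := by
  obtain ⟨s, hsub, hspan, hli⟩ := exists_linearIndependent K (Set.range v)
  have hsfin : s.Finite := (Set.finite_range v).subset hsub
  haveI : Fintype s := hsfin.fintype
  have hcard : finrank K (Submodule.span K s) = Fintype.card s := by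
    rw [finrank_span_set_eq_card hli, Set.toFinset_card]
  have hks : k ≤ Fintype.card s := by
    rw [← hcard, hspan]; exact hk
  obtain ⟨e⟩ : Nonempty (Fin k ↪ s) :=
    Function.Embedding.nonempty_of_card_le (by simpa using hks)
  have hw : ∀ x : s, ∃ i : ι, v i = (x : V) := fun x => hsub x.2
  choose w hwv using hw
  refine ⟨fun i => w (e i), ?_⟩
  have : (v ∘ fun i => w (e i)) = (fun x : s => (x : V)) ∘ e := by
    funext i; simp [Function.comp, hwv]
  rw [this]
  exact hli.comp e e.injective

/-- A nonzero k×k minor gives rank ≥ k. -/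
lemma aux_rank_of_minor {n m k : ℕ} (M : Matrix (Fin n) (Fin m) ℝ)
    (r : Fin k → Fin n) (c : Fin k → Fin m)
    (h : (M.submatrix r c).det ≠ 0) : k ≤ M.rank := by
  have hunit : IsUnit (M.submatrix r c) :=
    (Matrix.isUnit_iff_isUnit_det _).mpr (isUnit_iff_ne_zero.mpr h)
  have hcols : LinearIndependent ℝ (fun j => (M.submatrix r c)ᵀ j) :=
    Matrix.linearIndependent_cols_iff_isUnit.mpr hunit
  have hcomp : (fun j => (M.submatrix r c)ᵀ j) =
      (LinearMap.funLeft ℝ ℝ r) ∘ (Mᵀ ∘ c) := by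
    funext j; rfl
  rw [hcomp] at hcols
  have hli : LinearIndependent ℝ (Mᵀ ∘ c) := hcols.of_comp _
  have h1 : k = finrank ℝ (Submodule.span ℝ (Set.range (Mᵀ ∘ c))) := by
    rw [finrank_span_eq_card hli, Fintype.card_fin]
  rw [Matrix.rank_eq_finrank_span_cols, h1]
  apply Submodule.finrank_mono
  exact Submodule.span_mono (Set.range_comp_subset_range _ _)

/-- Rank ≥ k gives a nonzero k×k minor. -/
lemma aux_minor_of_rank {n m k : ℕ} (M : Matrix (Fin n) (Fin m) ℝ)
    (h : k ≤ M.rank) :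
    ∃ (r : Fin k → Fin n) (c : Fin k → Fin m), (M.submatrix r c).det ≠ 0 := by
  rw [Matrix.rank_eq_finrank_span_cols] at h
  obtain ⟨c, hc⟩ := aux_select (fun j => Mᵀ j) k h
  set B : Matrix (Fin n) (Fin k) ℝ := M.submatrix id c with hB
  have hBT : Bᵀ = (fun j => Mᵀ j) ∘ c := by funext j i; rfl
  have hrankB : B.rank = k := by
    rw [Matrix.rank_eq_finrank_span_cols, show B.col = Bᵀ from rfl, hBT, finrank_span_eq_card hc, Fintype.card_fin]
  have hrankBT : k ≤ finrank ℝ (Submodule.span ℝ (Set.range (fun i => B i))) := by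
    have := Matrix.rank_transpose B
    rw [Matrix.rank_eq_finrank_span_cols, show Bᵀ.col = B from rfl] at this
    rw [show (fun i => B i) = B from rfl, this, hrankB]
  obtain ⟨r, hr⟩ := aux_select (fun i => B i) k hrankBT
  refine ⟨r, c, ?_⟩
  have hrows : LinearIndependent ℝ (fun i => (M.submatrix r c) i) := by
    have : (fun i => (M.submatrix r c) i) = (fun i => B i) ∘ r := by
      funext i; rfl
    rw [this]; exact hr
  have := Matrix.linearIndependent_rows_iff_isUnit.mp hrows
  have := (Matrix.isUnit_iff_isUnit_det _).mp this
  exact this.ne_zero ∘ fun hz => hz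

theorem stmt_9 (n m : ℕ) (F : ℝ → Matrix (Fin n) (Fin m) ℝ)
    (hF : ∀ t₀ ∈ Set.Icc (0:ℝ) 1, ∃ ε : ℝ, 0 < ε ∧ ∀ i j,
      ∃ p : FormalMultilinearSeries ℝ ℝ ℝ,
        HasFPowerSeriesOnBall (fun t => F t i j) p t₀ (ENNReal.ofReal ε))
    (k : ℕ) (t₁ : ℝ) (ht₁ : t₁ ∈ Set.Icc (0:ℝ) 1) (hrk : k ≤ (F t₁).rank) :
    {t ∈ Set.Icc (0:ℝ) 1 | (F t).rank < k}.Finite := by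
  classical
  choose! ε hεpos hser using hF
  -- the open set on which all entries are analytic
  set U : Set ℝ := ⋃ t₀ ∈ Set.Icc (0:ℝ) 1, Metric.ball t₀ (ε t₀) with hU
  have hUopen : IsOpen U := isOpen_biUnion fun _ _ => Metric.isOpen_ball
  have hIccU : Set.Icc (0:ℝ) 1 ⊆ U := fun t ht =>
    Set.mem_biUnion ht (Metric.mem_ball_self (hεpos t ht))
  have hentry : ∀ i j, AnalyticOnNhd ℝ (fun t => F t i j) U := by
    intro i j x hx
    obtain ⟨t₀, ht₀, hxball⟩ := Set.mem_iUnion₂.mp hx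
    obtain ⟨p, hp⟩ := hser t₀ ht₀ i j
    apply hp.analyticAt_of_mem
    rwa [Metric.emetric_ball]
  -- a nonzero k×k minor at t₁
  obtain ⟨r, c, hdet⟩ := aux_minor_of_rank (F t₁) hrk
  set g : ℝ → ℝ := fun t => ((F t).submatrix r c).det with hg
  have hganal : AnalyticOnNhd ℝ g U := by
    intro x hx
    have : g = fun t => ∑ σ : Equiv.Perm (Fin k),
        (Equiv.Perm.sign σ : ℝ) * ∏ i, F t (r (σ i)) (c i) := by
      funext t; rw [hg]; simp [Matrix.det_apply', Matrix.submatrix_apply]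
    rw [this]
    refine Finset.analyticAt_fun_sum _ fun σ _ => ?_
    exact analyticAt_const.mul
      (Finset.analyticAt_fun_prod _ fun i _ => hentry (r (σ i)) (c i) x hx)
  -- a connected open interval between Icc and U
  obtain ⟨δ, hδpos, hthick⟩ :=
    isCompact_Icc.exists_thickening_subset_open hUopen hIccU
  set V : Set ℝ := Set.Ioo (-δ) (1+δ) with hV
  have hVU : V ⊆ U := by
    intro t ht
    apply hthick
    rw [Metric.mem_thickening_iff]
    refine ⟨max 0 (min t 1), ⟨le_max_left _ _, max_le zero_le_one (min_le_right _ _)⟩, ?_⟩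
    rw [Real.dist_eq]
    rcases le_or_gt t 0 with h0 | h0
    · rw [min_eq_left (h0.trans zero_le_one), max_eq_left h0]
      rw [abs_of_nonpos (by linarith)]
      linarith [ht.1]
    rcases le_or_gt t 1 with h1 | h1
    · rw [min_eq_left h1, max_eq_right h0.le]
      simpa using hδpos
    · rw [min_eq_right h1.le, max_eq_right zero_le_one]
      rw [abs_of_pos (by linarith)]
      linarith [ht.2]
  have hIccV : Set.Icc (0:ℝ) 1 ⊆ V := fun t ht =>
    ⟨by linarith [ht.1], by linarith [ht.2]⟩
  -- the zero set of the minor on Icc is finite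
  have hZfin : {t ∈ Set.Icc (0:ℝ) 1 | g t = 0}.Finite := by
    by_contra hinf
    have hinf' : {t ∈ Set.Icc (0:ℝ) 1 | g t = 0}.Infinite := hinf
    obtain ⟨x, hxIcc, hacc⟩ := hinf'.exists_accPt_of_subset_isCompact isCompact_Icc
      (Set.sep_subset _ _)
    have hfreq : ∃ᶠ z in nhdsWithin x {x}ᶜ, g z = 0 := by
      have hmem : ∃ᶠ z in nhdsWithin x {x}ᶜ,
          z ∈ {t ∈ Set.Icc (0:ℝ) 1 | g t = 0} :=
        Filter.frequently_mem_iff_neBot.mpr hacc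
      exact hmem.mono fun z hz => hz.2
    have := (hganal.mono hVU).eqOn_zero_of_preconnected_of_frequently_eq_zero
      isPreconnected_Ioo (hIccV hxIcc) hfreq
    exact hdet (this (hIccV ht₁))
  refine hZfin.subset fun t ht => ⟨ht.1, ?_⟩
  by_contra hne
  exact absurd (aux_rank_of_minor (F t) r c hne) (not_le.mpr ht.2)
end
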